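/- Let F_q be a finite field of characteristic p ≥ 5 and define b_{λ,α} = q^{-1/2}(ω_p^{tr((k+α)³ + λ(k+α))})_{k ∈ F_q}. If α ≠ β in F_q, then |⟨b_{κ,α}, b_{λ,β}⟩|² = 1/q for all κ, λ ∈ F_q; i.e., the bases B_α and B_β are mutually unbiased. -/

import Mathlib

open scoped InnerProductSpace

/-- The Alltop vector `b_{λ,α} = q^{-1/2} (ω_p^{tr((k+α)³ + λ(k+α))})_{k ∈ F_q}`,
where `ω_p = exp(2πi/p)` and `tr` is the absolute trace from `F_q` to `F_p`. -/
noncomputable def alltop (p : ℕ) (F : Type) [Field F] [Fintype F] [Algebra (ZMod p) F]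
    (lam alpha : F) : EuclideanSpace ℂ F :=
  WithLp.toLp 2 (fun k => (1 / Real.sqrt (Fintype.card F) : ℂ) *
    Complex.exp (2 * Real.pi * Complex.I *
      (ZMod.val (Algebra.trace (ZMod p) F ((k + alpha) ^ 3 + lam * (k + alpha))) : ℂ) / p))

section aux
set_option linter.unusedSectionVars false

variable (p : ℕ) [Fact p.Prime] (F : Type) [Field F] [Fintype F] [Algebra (ZMod p) F]

/-- The canonical additive character on `F`. -/
noncomputable def alltopChar : AddChar F ℂ :=
  (ZMod.stdAddChar (N := p)).compAddMonoidHom (Algebra.trace (ZMod p) F).toAddMonoidHom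

lemma alltopChar_apply (x : F) :
    alltopChar p F x = Complex.exp (2 * Real.pi * Complex.I *
      (ZMod.val (Algebra.trace (ZMod p) F x) : ℂ) / p) := by
  rw [alltopChar, AddChar.compAddMonoidHom_apply, ZMod.stdAddChar_apply, ZMod.toCircle_apply]
  rfl

lemma alltopChar_abs (x : F) : ‖alltopChar p F x‖ = 1 := by
  rw [alltopChar, AddChar.compAddMonoidHom_apply, ZMod.stdAddChar_apply]
  exact Circle.norm_coe _

lemma alltopChar_conj (x : F) :
    (starRingEnd ℂ) (alltopChar p F x) = alltopChar p F (-x) := by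
  have h1 : alltopChar p F x * alltopChar p F (-x) = 1 := by
    rw [← AddChar.map_add_eq_mul, add_neg_cancel, AddChar.map_zero_eq_one]
  have h2 : alltopChar p F x * (starRingEnd ℂ) (alltopChar p F x) = 1 := by
    rw [Complex.mul_conj, ← Complex.sq_norm, alltopChar_abs]
    norm_num
  rw [eq_inv_of_mul_eq_one_right h2, eq_inv_of_mul_eq_one_right h1]

lemma alltopChar_isPrimitive : (alltopChar p F).IsPrimitive := by
  apply AddChar.IsPrimitive.of_ne_one
  haveI : FiniteDimensional (ZMod p) F := Module.Finite.of_finite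
  have hsurj : Function.Surjective (Algebra.trace (ZMod p) F) := Algebra.trace_surjective _ _
  obtain ⟨x, hx⟩ := hsurj 1
  intro h
  have hx1 := DFunLike.congr_fun h x
  rw [AddChar.one_apply, alltopChar, AddChar.compAddMonoidHom_apply] at hx1
  have hx' : (Algebra.trace (ZMod p) F).toAddMonoidHom x = 1 := hx
  rw [hx'] at hx1
  haveI : Fact (1 < p) := ⟨(Fact.out : p.Prime).one_lt⟩
  have := ((ZMod.isPrimitive_stdAddChar p).zmod_char_eq_one_iff p (1 : ZMod p)).mp hx1
  exact one_ne_zero this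

open Finset in
lemma alltop_gauss (a b : F) (ha : a ≠ 0) (h2 : (2 : F) ≠ 0) :
    ‖∑ k : F, alltopChar p F (a * k ^ 2 + b * k)‖ ^ 2 = Fintype.card F := by
  classical
  set ψ := alltopChar p F with hψ
  set S := ∑ k : F, ψ (a * k ^ 2 + b * k) with hS
  have key : S * (starRingEnd ℂ) S = (Fintype.card F : ℂ) := by
    rw [hS, map_sum, sum_mul_sum]
    have h1 : ∀ x y : F, ψ (a * x ^ 2 + b * x) * (starRingEnd ℂ) (ψ (a * y ^ 2 + b * y))
        = ψ (a * x ^ 2 + b * x - (a * y ^ 2 + b * y)) := by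
      intro x y
      rw [hψ, alltopChar_conj, ← AddChar.map_add_eq_mul, sub_eq_add_neg]
    calc (∑ x : F, ∑ y : F, ψ (a * x ^ 2 + b * x) * (starRingEnd ℂ) (ψ (a * y ^ 2 + b * y)))
        = ∑ y : F, ∑ x : F, ψ (a * x ^ 2 + b * x - (a * y ^ 2 + b * y)) := by
          simp only [h1]; exact Finset.sum_comm
      _ = ∑ y : F, ∑ t : F, ψ (a * t ^ 2 + b * t) * ψ (y * (2 * a * t)) := by
          refine Finset.sum_congr rfl fun y _ => ?_
          rw [← Equiv.sum_comp (Equiv.addLeft y)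
            (fun x => ψ (a * x ^ 2 + b * x - (a * y ^ 2 + b * y)))]
          refine Finset.sum_congr rfl fun t _ => ?_
          rw [← AddChar.map_add_eq_mul]
          congr 1
          simp only [Equiv.coe_addLeft]
          ring
      _ = ∑ t : F, ψ (a * t ^ 2 + b * t) * ∑ y : F, ψ (y * (2 * a * t)) := by
          rw [Finset.sum_comm]
          exact Finset.sum_congr rfl fun t _ => (Finset.mul_sum _ _ _).symm
      _ = (Fintype.card F : ℂ) := by
          have hsms : ∀ t : F, (∑ y : F, ψ (y * (2 * a * t)))
              = ((if 2 * a * t = 0 then (Fintype.card F : ℕ) else 0 : ℕ) : ℂ) :=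
            fun t => AddChar.sum_mulShift _ (alltopChar_isPrimitive p F)
          simp only [hsms, Nat.cast_ite, Nat.cast_zero]
          rw [Finset.sum_eq_single 0]
          · simp
          · intro t _ ht
            have h0 : 2 * a * t ≠ 0 := mul_ne_zero (mul_ne_zero h2 ha) ht
            simp [h0]
          · simp
  have : (Complex.normSq S : ℂ) = (Fintype.card F : ℂ) := by
    rw [← Complex.mul_conj]; exact key
  have h' : Complex.normSq S = (Fintype.card F : ℝ) := by exact_mod_cast this
  rw [Complex.sq_norm, h']

end aux

/-- For `F_q` of characteristic `p ≥ 5` and `α ≠ β`, the bases `B_α` and `B_β`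
are mutually unbiased: `|⟨b_{κ,α}, b_{λ,β}⟩|² = 1/q` for all `κ, λ ∈ F_q`. -/
theorem alltop_mutually_unbiased (p : ℕ) [Fact p.Prime] (hp : 5 ≤ p)
    (F : Type) [Field F] [Fintype F] [Algebra (ZMod p) F]
    (alpha beta : F) (hab : alpha ≠ beta) (kappa lam : F) :
    ‖⟪alltop p F kappa alpha, alltop p F lam beta⟫_ℂ‖ ^ 2
      = 1 / Fintype.card F := by
  classical
  haveI : CharP F p := charP_of_injective_algebraMap (algebraMap (ZMod p) F).injective p
  have hq : 0 < Fintype.card F := Fintype.card_pos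
  have h2 : (2 : F) ≠ 0 := by
    have : ((2 : ℕ) : F) ≠ 0 := by
      rw [Ne, CharP.cast_eq_zero_iff F p 2]
      intro hdvd; have := Nat.le_of_dvd (by norm_num) hdvd; omega
    simpa using this
  have h3 : (3 : F) ≠ 0 := by
    have : ((3 : ℕ) : F) ≠ 0 := by
      rw [Ne, CharP.cast_eq_zero_iff F p 3]
      intro hdvd; have := Nat.le_of_dvd (by norm_num) hdvd; omega
    simpa using this
  set ψ := alltopChar p F with hψ
  set a := 3 * (beta - alpha) with ha_def
  set b := 3 * (beta ^ 2 - alpha ^ 2) + lam - kappa with hb_def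
  set c := beta ^ 3 - alpha ^ 3 + lam * beta - kappa * alpha with hc_def
  have ha : a ≠ 0 := mul_ne_zero h3 (sub_ne_zero.mpr (Ne.symm hab))
  have hc0 : ((1 : ℂ) / (Real.sqrt (Fintype.card F) : ℂ)) *
      ((1 : ℂ) / (Real.sqrt (Fintype.card F) : ℂ)) = 1 / (Fintype.card F : ℂ) := by
    rw [div_mul_div_comm, one_mul, ← Complex.ofReal_mul,
      Real.mul_self_sqrt (by positivity)]
    push_cast
    ring
  have hinner : ⟪alltop p F kappa alpha, alltop p F lam beta⟫_ℂ
      = (1 / (Fintype.card F : ℂ)) * (ψ c * ∑ k : F, ψ (a * k ^ 2 + b * k)) := by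
    rw [PiLp.inner_apply]
    have expand : ∀ k : F,
        ⟪alltop p F kappa alpha k, alltop p F lam beta k⟫_ℂ
        = (1 / (Fintype.card F : ℂ)) * (ψ c * ψ (a * k ^ 2 + b * k)) := by
      intro k
      have hA : alltop p F kappa alpha k = (1 / (Real.sqrt (Fintype.card F) : ℂ)) *
          ψ ((k + alpha) ^ 3 + kappa * (k + alpha)) := by
        rw [hψ, alltopChar_apply]; rfl
      have hB : alltop p F lam beta k = (1 / (Real.sqrt (Fintype.card F) : ℂ)) *
          ψ ((k + beta) ^ 3 + lam * (k + beta)) := by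
        rw [hψ, alltopChar_apply]; rfl
      rw [RCLike.inner_apply', hA, hB, map_mul, alltopChar_conj]
      have hconj : (starRingEnd ℂ) ((1 : ℂ) / (Real.sqrt (Fintype.card F) : ℂ))
          = (1 : ℂ) / (Real.sqrt (Fintype.card F) : ℂ) := by
        rw [map_div₀, map_one, Complex.conj_ofReal]
      rw [hconj]
      have hmul : ψ (-((k + alpha) ^ 3 + kappa * (k + alpha))) *
          ψ ((k + beta) ^ 3 + lam * (k + beta)) = ψ c * ψ (a * k ^ 2 + b * k) := by
        rw [← AddChar.map_add_eq_mul, ← AddChar.map_add_eq_mul]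
        congr 1
        rw [ha_def, hb_def, hc_def]
        ring
      calc (1 : ℂ) / (Real.sqrt (Fintype.card F) : ℂ) *
            ψ (-((k + alpha) ^ 3 + kappa * (k + alpha))) *
            ((1 : ℂ) / (Real.sqrt (Fintype.card F) : ℂ) * ψ ((k + beta) ^ 3 + lam * (k + beta)))
          = ((1 : ℂ) / (Real.sqrt (Fintype.card F) : ℂ) *
              ((1 : ℂ) / (Real.sqrt (Fintype.card F) : ℂ))) *
            (ψ (-((k + alpha) ^ 3 + kappa * (k + alpha))) *
              ψ ((k + beta) ^ 3 + lam * (k + beta))) := by ring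
        _ = (1 / (Fintype.card F : ℂ)) * (ψ c * ψ (a * k ^ 2 + b * k)) := by
            rw [hc0, hmul]
    rw [Finset.sum_congr rfl fun k _ => expand k, ← Finset.mul_sum, ← Finset.mul_sum]
  rw [hinner, norm_mul, norm_mul, mul_pow, mul_pow, alltop_gauss p F a b ha h2]
  rw [hψ, alltopChar_abs]
  have habs1 : ‖(1 / (Fintype.card F : ℂ))‖ = 1 / (Fintype.card F : ℝ) := by
    rw [norm_div, norm_one, Complex.norm_natCast]
  rw [habs1]
  have hqr : (0 : ℝ) < (Fintype.card F : ℝ) := by exact_mod_cast hq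
  field_simp
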